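/- arXiv:2209.14579 — 2 statements merged into one kernel-verified Lean document; each statement's English description precedes it below -/
import Mathlib

section
/- Let A = diag(G₁,...,G_m,[1]) ∈ ℝ^{n×n} (possibly without the 1×1 block [1]) be orthogonal with 2×2 rotation blocks G_j = [[c_j, s_j],[−s_j, c_j]], c_j² + s_j² = 1, s_j ≠ 0, and 0 < c₁ < ⋯ < c_m. Let v₀ be a unit vector with d(A,v₀) ≥ 2. Then any limit point v_* of the ACI(1) sequence {v_k} (w̃_k = (A − α_k I)v_k with α_k = v_kᵀAv_k, w_k = w̃_k/‖w̃_k‖, ṽ_{k+1} = (Aᵀ − β_k I)w_k with β_k = w_kᵀAw_k, v_{k+1} = ṽ_{k+1}/‖ṽ_{k+1}‖) satisfies d(A,v_*) = 2, and the common limit α = β of the Rayleigh quotient sequences equals the real part c_j of some eigenvalue of A; moreover v_* is supported in exactly one 2×2 block. -/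
open Polynomial Filter Topology Matrix

noncomputable section

def mulv {ι : Type*} [Fintype ι] (A : Matrix ι ι ℝ) (v : EuclideanSpace ℝ ι) :
    EuclideanSpace ℝ ι :=
  (WithLp.equiv 2 (ι → ℝ)).symm (A.mulVec ((WithLp.equiv 2 (ι → ℝ)) v))

def Krylov {ι : Type*} [Fintype ι] [DecidableEq ι] (A : Matrix ι ι ℝ) (s : ℕ) (v : EuclideanSpace ℝ ι) :
    Submodule ℝ (EuclideanSpace ℝ ι) :=
  Submodule.span ℝ (Set.range fun i : Fin s => mulv (A ^ (i : ℕ)) v)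

def IsArnoldiProj {ι : Type*} [Fintype ι] [DecidableEq ι] (A : Matrix ι ι ℝ) (s : ℕ)
    (v w : EuclideanSpace ℝ ι) : Prop :=
  w - mulv (A ^ s) v ∈ Krylov A s v ∧ ∀ u ∈ Krylov A s v, inner ℝ w u = (0 : ℝ)

def vgrade {ι : Type*} [Fintype ι] [DecidableEq ι] (A : Matrix ι ι ℝ)
    (v : EuclideanSpace ℝ ι) : ℕ :=
  sInf {d | ∃ p : ℝ[X], p ≠ 0 ∧ p.natDegree = d ∧ mulv (aeval A p) v = 0}

def dmin {ι : Type*} [Fintype ι] [DecidableEq ι] (A : Matrix ι ι ℝ) : ℕ :=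
  (minpoly ℝ A).natDegree

def Phi {ι : Type*} [Fintype ι] [DecidableEq ι] (A : Matrix ι ι ℝ) (s : ℕ) : ℝ :=
  sSup {r | ∃ v : EuclideanSpace ℝ ι, ‖v‖ = 1 ∧
    r = sInf {t | ∃ q : ℝ[X], q.Monic ∧ q.natDegree = s ∧ t = ‖mulv (aeval A q) v‖}}

def opNorm {ι : Type*} [Fintype ι] [DecidableEq ι] (A : Matrix ι ι ℝ) : ℝ :=
  ‖Matrix.toEuclideanCLM (𝕜 := ℝ) A‖

def blockRot (m e : ℕ) (c s : Fin m → ℝ) :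
    Matrix ((Fin m × Fin 2) ⊕ Fin e) ((Fin m × Fin 2) ⊕ Fin e) ℝ :=
  fun i j => match i, j with
  | Sum.inl (a, x), Sum.inl (b, y) =>
      if a = b then
        (if x = y then c a else if (x : ℕ) = 0 then s a else -(s a))
      else 0
  | Sum.inr i, Sum.inr j => if i = j then 1 else 0
  | _, _ => 0

namespace ACIAux
variable {ι : Type*} [Fintype ι]

lemma mulv_apply (A : Matrix ι ι ℝ) (v : EuclideanSpace ℝ ι) (i : ι) :
    mulv A v i = ∑ j, A i j * v j := rfl

lemma inner_eq (x y : EuclideanSpace ℝ ι) : (inner ℝ x y : ℝ) = ∑ i, x i * y i := by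
  simp [PiLp.inner_apply, mul_comm]

lemma mulv_adj (A : Matrix ι ι ℝ) (x y : EuclideanSpace ℝ ι) :
    (inner ℝ (mulv A x) y : ℝ) = inner ℝ x (mulv Aᵀ y) := by
  simp only [inner_eq]
  calc ∑ i, mulv A x i * y i = ∑ i, ∑ j, A i j * x j * y i := by
        apply Finset.sum_congr rfl; intro i _
        rw [show mulv A x i = ∑ j, A i j * x j from rfl, Finset.sum_mul]
    _ = ∑ j, ∑ i, A i j * x j * y i := Finset.sum_comm
    _ = ∑ j, x j * mulv Aᵀ y j := by
        apply Finset.sum_congr rfl; intro j _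
        rw [show mulv Aᵀ y j = ∑ i, Aᵀ j i * y i from rfl, Finset.mul_sum]
        apply Finset.sum_congr rfl; intro i _
        rw [Matrix.transpose_apply]; ring

lemma mulv_sub (A : Matrix ι ι ℝ) (x y : EuclideanSpace ℝ ι) :
    mulv A (x - y) = mulv A x - mulv A y := by
  ext i
  show ∑ j, A i j * (x j - y j) = (∑ j, A i j * x j) - ∑ j, A i j * y j
  simp only [mul_sub, Finset.sum_sub_distrib]

lemma mulv_add (A : Matrix ι ι ℝ) (x y : EuclideanSpace ℝ ι) :
    mulv A (x + y) = mulv A x + mulv A y := by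
  ext i
  show ∑ j, A i j * (x j + y j) = (∑ j, A i j * x j) + ∑ j, A i j * y j
  simp only [mul_add, Finset.sum_add_distrib]

lemma mulv_smul (A : Matrix ι ι ℝ) (t : ℝ) (x : EuclideanSpace ℝ ι) :
    mulv A (t • x) = t • mulv A x := by
  ext i
  show ∑ j, A i j * (t * x j) = t * ∑ j, A i j * x j
  rw [Finset.mul_sum]; apply Finset.sum_congr rfl; intros; ring

lemma mulv_addM (A B : Matrix ι ι ℝ) (x : EuclideanSpace ℝ ι) :
    mulv (A + B) x = mulv A x + mulv B x := by
  ext i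
  show ∑ j, (A i j + B i j) * x j = (∑ j, A i j * x j) + ∑ j, B i j * x j
  simp only [add_mul, Finset.sum_add_distrib]

lemma mulv_subM (A B : Matrix ι ι ℝ) (x : EuclideanSpace ℝ ι) :
    mulv (A - B) x = mulv A x - mulv B x := by
  ext i
  show ∑ j, (A i j - B i j) * x j = (∑ j, A i j * x j) - ∑ j, B i j * x j
  simp only [sub_mul, Finset.sum_sub_distrib]

lemma mulv_smulM (A : Matrix ι ι ℝ) (t : ℝ) (x : EuclideanSpace ℝ ι) :
    mulv (t • A) x = t • mulv A x := by
  ext i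
  show ∑ j, (t * A i j) * x j = t * ∑ j, A i j * x j
  rw [Finset.mul_sum]; apply Finset.sum_congr rfl; intros; ring

lemma mulv_one [DecidableEq ι] (x : EuclideanSpace ℝ ι) : mulv (1 : Matrix ι ι ℝ) x = x := by
  have : (1 : Matrix ι ι ℝ).mulVec ((WithLp.equiv 2 (ι → ℝ)) x) = (WithLp.equiv 2 (ι → ℝ)) x :=
    Matrix.one_mulVec _
  simpa [mulv] using congrArg (WithLp.equiv 2 (ι → ℝ)).symm this

lemma mulv_mulv (A B : Matrix ι ι ℝ) (x : EuclideanSpace ℝ ι) :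
    mulv A (mulv B x) = mulv (A * B) x := by
  simp [mulv, Matrix.mulVec_mulVec]

lemma mulv_continuous (A : Matrix ι ι ℝ) : Continuous (mulv A) := by
  have : IsLinearMap ℝ (mulv A) := ⟨mulv_add A, fun t x => mulv_smul A t x⟩
  exact (this.mk' _).continuous_of_finiteDimensional

lemma norm_sq_eq (x : EuclideanSpace ℝ ι) : ‖x‖ ^ 2 = ∑ i, x i ^ 2 := by
  rw [← real_inner_self_eq_norm_sq, inner_eq]
  apply Finset.sum_congr rfl; intros; ring

lemma inner_symm_op (A : Matrix ι ι ℝ) (x : EuclideanSpace ℝ ι) :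
    (inner ℝ x (mulv Aᵀ x) : ℝ) = inner ℝ x (mulv A x) := by
  rw [← mulv_adj, real_inner_comm]

/-- The generic one-step algebraic identity.  -/
lemma step (M : Matrix ι ι ℝ)
    (h1 : ∀ y, mulv Mᵀ (mulv M y) = y) (h2 : ∀ y, mulv M (mulv Mᵀ y) = y)
    (x : EuclideanSpace ℝ ι) (hx : ‖x‖ = 1) (a : ℝ) (ha : a = (inner ℝ x (mulv M x) : ℝ)) :
    ‖mulv M x - a • x‖ ^ 2 = 1 - a ^ 2 ∧
    2 * (inner ℝ (mulv M x - a • x) (mulv M (mulv M x - a • x)) : ℝ) =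
      2 * a * (1 - a ^ 2) - a * ‖(mulv M x + mulv Mᵀ x) - (2 * a) • x‖ ^ 2 := by
  set q : ℝ := inner ℝ x (mulv M (mulv M x)) with hq
  have hxx : (inner ℝ x x : ℝ) = 1 := by
    rw [real_inner_self_eq_norm_sq, hx]; norm_num
  have hMM : (inner ℝ (mulv M x) (mulv M x) : ℝ) = 1 := by rw [mulv_adj, h1, hxx]
  have hMxA : (inner ℝ (mulv M x) (mulv M (mulv M x)) : ℝ) = a := by
    rw [mulv_adj, h1, ha]
  have hxM : (inner ℝ (mulv M x) x : ℝ) = a := by rw [real_inner_comm, ha]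
  have hxM' : (inner ℝ x (mulv M x) : ℝ) = a := ha.symm
  have hxMT : (inner ℝ x (mulv Mᵀ x) : ℝ) = a := by
    rw [← mulv_adj, hxM]
  have hMTx : (inner ℝ (mulv Mᵀ x) x : ℝ) = a := by rw [real_inner_comm, hxMT]
  have hMMT : (inner ℝ (mulv M x) (mulv Mᵀ x) : ℝ) = q := by
    rw [← mulv_adj, real_inner_comm, hq]
  have hMTM : (inner ℝ (mulv Mᵀ x) (mulv M x) : ℝ) = q := by rw [real_inner_comm, hMMT]
  have hxMM : (inner ℝ x (mulv M (mulv M x)) : ℝ) = q := hq.symm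
  have hMTMT : (inner ℝ (mulv Mᵀ x) (mulv Mᵀ x) : ℝ) = 1 := by
    rw [mulv_adj, Matrix.transpose_transpose, h2, hxx]
  constructor
  · rw [← real_inner_self_eq_norm_sq]
    simp only [inner_sub_left, inner_sub_right, real_inner_smul_left, real_inner_smul_right,
      hMM, hxM, hxM', hxx]
    ring
  · have hE : ‖(mulv M x + mulv Mᵀ x) - (2 * a) • x‖ ^ 2 = 2 + 2 * q - 4 * a ^ 2 := by
      rw [← real_inner_self_eq_norm_sq]
      simp only [inner_sub_left, inner_sub_right, inner_add_left, inner_add_right,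
        real_inner_smul_left, real_inner_smul_right,
        hMM, hMMT, hMTM, hMTMT, hxM, hxM', hxMT, hMTx, hxx]
      ring
    rw [hE, mulv_sub, mulv_smul]
    simp only [inner_sub_left, inner_sub_right, real_inner_smul_left, real_inner_smul_right,
      hMxA, hMM, hxMM, hxM']
    ring

section Block
variable {m e : ℕ} (c s : Fin m → ℝ)

/-- diagonal of the symmetrized matrix -/
def dd (c : Fin m → ℝ) : (Fin m × Fin 2) ⊕ Fin e → ℝ := Sum.elim (fun p => c p.1) fun _ => 1

lemma mulvA0 (x : EuclideanSpace ℝ ((Fin m × Fin 2) ⊕ Fin e)) (j : Fin m) :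
    mulv (blockRot m e c s) x (Sum.inl (j, 0)) =
      c j * x (Sum.inl (j, 0)) + s j * x (Sum.inl (j, 1)) := by
  rw [mulv_apply, Fintype.sum_sum_type, Fintype.sum_prod_type]
  simp only [blockRot, Fin.sum_univ_two]
  rw [Finset.sum_eq_single j]
  · simp
  · intro b _ hb; simp [Ne.symm hb]
  · simp

lemma mulvA1 (x : EuclideanSpace ℝ ((Fin m × Fin 2) ⊕ Fin e)) (j : Fin m) :
    mulv (blockRot m e c s) x (Sum.inl (j, 1)) =
      -(s j) * x (Sum.inl (j, 0)) + c j * x (Sum.inl (j, 1)) := by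
  rw [mulv_apply, Fintype.sum_sum_type, Fintype.sum_prod_type]
  simp only [blockRot, Fin.sum_univ_two]
  rw [Finset.sum_eq_single j]
  · simp
  · intro b _ hb; simp [Ne.symm hb]
  · simp

lemma mulvAr (x : EuclideanSpace ℝ ((Fin m × Fin 2) ⊕ Fin e)) (i : Fin e) :
    mulv (blockRot m e c s) x (Sum.inr i) = x (Sum.inr i) := by
  rw [mulv_apply, Fintype.sum_sum_type]
  simp [blockRot]

lemma mulvAT0 (x : EuclideanSpace ℝ ((Fin m × Fin 2) ⊕ Fin e)) (j : Fin m) :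
    mulv (blockRot m e c s)ᵀ x (Sum.inl (j, 0)) =
      c j * x (Sum.inl (j, 0)) + -(s j) * x (Sum.inl (j, 1)) := by
  rw [mulv_apply, Fintype.sum_sum_type, Fintype.sum_prod_type]
  simp only [blockRot, Matrix.transpose_apply, Fin.sum_univ_two]
  rw [Finset.sum_eq_single j]
  · simp
  · intro b _ hb; simp [hb]
  · simp

lemma mulvAT1 (x : EuclideanSpace ℝ ((Fin m × Fin 2) ⊕ Fin e)) (j : Fin m) :
    mulv (blockRot m e c s)ᵀ x (Sum.inl (j, 1)) =
      s j * x (Sum.inl (j, 0)) + c j * x (Sum.inl (j, 1)) := by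
  rw [mulv_apply, Fintype.sum_sum_type, Fintype.sum_prod_type]
  simp only [blockRot, Matrix.transpose_apply, Fin.sum_univ_two]
  rw [Finset.sum_eq_single j]
  · simp
  · intro b _ hb; simp [hb]
  · simp

lemma mulvATr (x : EuclideanSpace ℝ ((Fin m × Fin 2) ⊕ Fin e)) (i : Fin e) :
    mulv (blockRot m e c s)ᵀ x (Sum.inr i) = x (Sum.inr i) := by
  rw [mulv_apply, Fintype.sum_sum_type]
  simp [blockRot, Matrix.transpose_apply]

variable (hcs : ∀ j, c j ^ 2 + s j ^ 2 = 1)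
include hcs

lemma ATA (x : EuclideanSpace ℝ ((Fin m × Fin 2) ⊕ Fin e)) :
    mulv (blockRot m e c s)ᵀ (mulv (blockRot m e c s) x) = x := by
  ext i
  match i with
  | Sum.inl (j, ⟨0, _⟩) =>
    rw [show ((Sum.inl (j, ⟨0, by norm_num⟩)) : (Fin m × Fin 2) ⊕ Fin e) = Sum.inl (j, 0) from rfl,
      mulvAT0, mulvA0, mulvA1]
    linear_combination x (Sum.inl (j, 0)) * hcs j
  | Sum.inl (j, ⟨1, _⟩) =>
    rw [show ((Sum.inl (j, ⟨1, by norm_num⟩)) : (Fin m × Fin 2) ⊕ Fin e) = Sum.inl (j, 1) from rfl,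
      mulvAT1, mulvA0, mulvA1]
    linear_combination x (Sum.inl (j, 1)) * hcs j
  | Sum.inr i => rw [mulvATr, mulvAr]

lemma AAT (x : EuclideanSpace ℝ ((Fin m × Fin 2) ⊕ Fin e)) :
    mulv (blockRot m e c s) (mulv (blockRot m e c s)ᵀ x) = x := by
  ext i
  match i with
  | Sum.inl (j, ⟨0, _⟩) =>
    rw [show ((Sum.inl (j, ⟨0, by norm_num⟩)) : (Fin m × Fin 2) ⊕ Fin e) = Sum.inl (j, 0) from rfl,
      mulvA0, mulvAT0, mulvAT1]
    linear_combination x (Sum.inl (j, 0)) * hcs j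
  | Sum.inl (j, ⟨1, _⟩) =>
    rw [show ((Sum.inl (j, ⟨1, by norm_num⟩)) : (Fin m × Fin 2) ⊕ Fin e) = Sum.inl (j, 1) from rfl,
      mulvA1, mulvAT0, mulvAT1]
    linear_combination x (Sum.inl (j, 1)) * hcs j
  | Sum.inr i => rw [mulvAr, mulvATr]

omit hcs

lemma sumAT_apply (x : EuclideanSpace ℝ ((Fin m × Fin 2) ⊕ Fin e)) (i : (Fin m × Fin 2) ⊕ Fin e) :
    mulv (blockRot m e c s) x i + mulv (blockRot m e c s)ᵀ x i = 2 * dd c i * x i := by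
  match i with
  | Sum.inl (j, ⟨0, _⟩) =>
    rw [show ((Sum.inl (j, ⟨0, by norm_num⟩)) : (Fin m × Fin 2) ⊕ Fin e) = Sum.inl (j, 0) from rfl,
      mulvA0, mulvAT0]
    simp [dd]; ring
  | Sum.inl (j, ⟨1, _⟩) =>
    rw [show ((Sum.inl (j, ⟨1, by norm_num⟩)) : (Fin m × Fin 2) ⊕ Fin e) = Sum.inl (j, 1) from rfl,
      mulvA1, mulvAT1]
    simp [dd]; ring
  | Sum.inr i => rw [mulvAr, mulvATr]; simp [dd]; ring

end Block

section R
variable {m e : ℕ} (c s : Fin m → ℝ)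

lemma rot_kernel (a t x₁ x₂ : ℝ) (ht : t ≠ 0)
    (h1 : a * x₁ + t * x₂ = 0) (h2 : -t * x₁ + a * x₂ = 0) : x₁ = 0 ∧ x₂ = 0 := by
  have hpos : 0 < a ^ 2 + t ^ 2 := by
    have h2' : 0 < t ^ 2 := by
      have := abs_pos.mpr ht
      nlinarith [sq_abs t]
    nlinarith [sq_nonneg a]
  constructor
  · have hx : (a ^ 2 + t ^ 2) * x₁ = 0 := by linear_combination a * h1 - t * h2
    rcases mul_eq_zero.mp hx with h | h
    · exact absurd h (ne_of_gt hpos)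
    · exact h
  · have hx : (a ^ 2 + t ^ 2) * x₂ = 0 := by linear_combination t * h1 + a * h2
    rcases mul_eq_zero.mp hx with h | h
    · exact absurd h (ne_of_gt hpos)
    · exact h

lemma rayleigh_eq (x : EuclideanSpace ℝ ((Fin m × Fin 2) ⊕ Fin e)) :
    (inner ℝ x (mulv (blockRot m e c s) x) : ℝ) = ∑ i, dd c i * x i ^ 2 := by
  have h2 : 2 * (inner ℝ x (mulv (blockRot m e c s) x) : ℝ) = ∑ i, 2 * (dd c i * x i ^ 2) := by
    calc 2 * (inner ℝ x (mulv (blockRot m e c s) x) : ℝ)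
        = (inner ℝ x (mulv (blockRot m e c s) x) : ℝ)
          + (inner ℝ x (mulv (blockRot m e c s)ᵀ x) : ℝ) := by rw [inner_symm_op]; ring
      _ = ∑ i, x i * (mulv (blockRot m e c s) x i + mulv (blockRot m e c s)ᵀ x i) := by
          rw [inner_eq, inner_eq, ← Finset.sum_add_distrib]
          exact Finset.sum_congr rfl fun i _ => by ring
      _ = ∑ i, 2 * (dd c i * x i ^ 2) := by
          refine Finset.sum_congr rfl fun i _ => ?_
          rw [sumAT_apply]; ring
  rw [← Finset.mul_sum] at h2
  linarith

lemma ray_bounds (lo : ℝ) (hlo : ∀ i : (Fin m × Fin 2) ⊕ Fin e, lo ≤ dd c i)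
    (hhi : ∀ i : (Fin m × Fin 2) ⊕ Fin e, dd (e := e) c i ≤ 1)
    (x : EuclideanSpace ℝ ((Fin m × Fin 2) ⊕ Fin e)) (hx : ‖x‖ = 1) :
    lo ≤ (inner ℝ x (mulv (blockRot m e c s) x) : ℝ) ∧
      (inner ℝ x (mulv (blockRot m e c s) x) : ℝ) ≤ 1 := by
  have hsum : ∑ i, x i ^ 2 = 1 := by rw [← norm_sq_eq, hx]; norm_num
  rw [rayleigh_eq]
  constructor
  · calc lo = ∑ i, lo * x i ^ 2 := by rw [← Finset.mul_sum, hsum, mul_one]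
      _ ≤ ∑ i, dd c i * x i ^ 2 :=
        Finset.sum_le_sum fun i _ => mul_le_mul_of_nonneg_right (hlo i) (sq_nonneg _)
  · calc ∑ i, dd c i * x i ^ 2 ≤ ∑ i, x i ^ 2 :=
        Finset.sum_le_sum fun i _ => by nlinarith [hhi i, sq_nonneg (x i)]
      _ = 1 := hsum

lemma ray_lt_one (hhi : ∀ i : (Fin m × Fin 2) ⊕ Fin e, dd (e := e) c i ≤ 1)
    (x : EuclideanSpace ℝ ((Fin m × Fin 2) ⊕ Fin e)) (hx : ‖x‖ = 1)
    (p : Fin m × Fin 2) (hp : x (Sum.inl p) ≠ 0) (hplt : c p.1 < 1) :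
    (inner ℝ x (mulv (blockRot m e c s) x) : ℝ) < 1 := by
  have hsum : ∑ i, x i ^ 2 = 1 := by rw [← norm_sq_eq, hx]; norm_num
  rw [rayleigh_eq]
  calc ∑ i, dd c i * x i ^ 2 < ∑ i, x i ^ 2 := by
        refine Finset.sum_lt_sum (fun i _ => by nlinarith [hhi i, sq_nonneg (x i)]) ?_
        refine ⟨Sum.inl p, Finset.mem_univ _, ?_⟩
        have hxp : 0 < x (Sum.inl p) ^ 2 := by
          have := abs_pos.mpr hp
          nlinarith [sq_abs (x (Sum.inl p))]
        have : dd (e := e) c (Sum.inl p) = c p.1 := rfl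
        rw [this]; nlinarith
    _ = 1 := hsum

end R
end ACIAux

set_option maxHeartbeats 1000000 in
theorem aci1_orthogonal_limit {m e : ℕ} (hm : 0 < m) (he : e ≤ 1)
    (c s : Fin m → ℝ) (hcs : ∀ j, c j ^ 2 + s j ^ 2 = 1) (hsne : ∀ j, s j ≠ 0)
    (hc0 : ∀ j, 0 < c j) (hmono : StrictMono c)
    (A : Matrix ((Fin m × Fin 2) ⊕ Fin e) ((Fin m × Fin 2) ⊕ Fin e) ℝ)
    (hA : A = blockRot m e c s)
    (v wt w vt : ℕ → EuclideanSpace ℝ ((Fin m × Fin 2) ⊕ Fin e)) (α β : ℕ → ℝ)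
    (hv0 : ‖v 0‖ = 1) (hg : 2 ≤ vgrade A (v 0))
    (hα : ∀ k, α k = (inner ℝ (v k) (mulv A (v k)) : ℝ))
    (hwt : ∀ k, wt k = mulv A (v k) - α k • v k)
    (hw : ∀ k, w k = ‖wt k‖⁻¹ • wt k)
    (hβ : ∀ k, β k = (inner ℝ (w k) (mulv A (w k)) : ℝ))
    (hvt : ∀ k, vt (k + 1) = mulv Aᵀ (w k) - β k • w k)
    (hv : ∀ k, v (k + 1) = ‖vt (k + 1)‖⁻¹ • vt (k + 1))
    (vstar : EuclideanSpace ℝ ((Fin m × Fin 2) ⊕ Fin e))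
    (hlim : ∃ φ : ℕ → ℕ, StrictMono φ ∧ Tendsto (v ∘ φ) atTop (𝓝 vstar)) :
    vgrade A vstar = 2 ∧
    ∃! j : Fin m, Tendsto α atTop (𝓝 (c j)) ∧ Tendsto β atTop (𝓝 (c j)) ∧
      ∀ x : (Fin m × Fin 2) ⊕ Fin e, (∀ i : Fin 2, x ≠ Sum.inl (j, i)) →
        (WithLp.equiv 2 (((Fin m × Fin 2) ⊕ Fin e) → ℝ)) vstar x = 0 := by

  classical
  subst hA
  -- basic scalar facts
  have hs2 : ∀ j, 0 < s j ^ 2 := by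
    intro j
    have := abs_pos.mpr (hsne j)
    nlinarith [sq_abs (s j)]
  have hc1 : ∀ j, c j < 1 := by
    intro j
    nlinarith [hcs j, hc0 j, hs2 j]
  set j0 : Fin m := ⟨0, hm⟩ with hj0
  have hc0L : 0 < c j0 := hc0 j0
  have hdd_lo : ∀ i : (Fin m × Fin 2) ⊕ Fin e, c j0 ≤ ACIAux.dd c i := by
    rintro (⟨a, b⟩ | i)
    · exact hmono.monotone (by simp [hj0, Fin.le_def])
    · exact (hc1 j0).le
  have hdd_hi : ∀ i : (Fin m × Fin 2) ⊕ Fin e, ACIAux.dd (e := e) c i ≤ 1 := by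
    rintro (⟨a, b⟩ | i)
    · exact (hc1 a).le
    · exact le_refl 1
  -- the one-step analysis
  have hstep : ∀ k, (‖v k‖ = 1 ∧ ∃ p : Fin m × Fin 2, v k (Sum.inl p) ≠ 0) →
      ((‖v (k+1)‖ = 1 ∧ ∃ p : Fin m × Fin 2, v (k+1) (Sum.inl p) ≠ 0) ∧
       (α (k+1) ≤ β k ∧ β k ≤ α k) ∧
       2 * (α k - β k) * (1 - α k ^ 2) =
         α k * ‖(mulv (blockRot m e c s) (v k) + mulv (blockRot m e c s)ᵀ (v k))
                  - (2 * α k) • v k‖ ^ 2) := by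
    intro k hk
    obtain ⟨hvk1, ⟨j, b⟩, hp⟩ := hk
    have hαk : α k = (inner ℝ (v k) (mulv (blockRot m e c s) (v k)) : ℝ) := hα k
    have hαlo : c j0 ≤ α k := by
      rw [hαk]; exact (ACIAux.ray_bounds c s (c j0) hdd_lo hdd_hi (v k) hvk1).1
    have hαhi : α k < 1 := by
      rw [hαk]; exact ACIAux.ray_lt_one c s hdd_hi (v k) hvk1 (j, b) hp (hc1 j)
    have hαpos : 0 < α k := lt_of_lt_of_le hc0L hαlo
    obtain ⟨hwt_norm, hwt_id⟩ := ACIAux.step (blockRot m e c s)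
      (fun y => ACIAux.ATA c s hcs y) (fun y => ACIAux.AAT c s hcs y) (v k) hvk1 (α k) hαk
    have hwtk : wt k = mulv (blockRot m e c s) (v k) - α k • v k := hwt k
    rw [← hwtk] at hwt_norm hwt_id
    set Ev : ℝ := ‖(mulv (blockRot m e c s) (v k) + mulv (blockRot m e c s)ᵀ (v k))
        - (2 * α k) • v k‖ ^ 2 with hEvdef
    -- coordinates of wt in block j
    have hwt0 : wt k (Sum.inl (j, 0)) =
        (c j - α k) * v k (Sum.inl (j, 0)) + s j * v k (Sum.inl (j, 1)) := by
      rw [hwtk]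
      simp only [PiLp.sub_apply, PiLp.smul_apply, smul_eq_mul]
      rw [ACIAux.mulvA0 c s (v k) j]; ring
    have hwt1 : wt k (Sum.inl (j, 1)) =
        -(s j) * v k (Sum.inl (j, 0)) + (c j - α k) * v k (Sum.inl (j, 1)) := by
      rw [hwtk]
      simp only [PiLp.sub_apply, PiLp.smul_apply, smul_eq_mul]
      rw [ACIAux.mulvA1 c s (v k) j]; ring
    have hblock : ¬ (wt k (Sum.inl (j, 0)) = 0 ∧ wt k (Sum.inl (j, 1)) = 0) := by
      rintro ⟨h0, h1⟩
      rw [hwt0] at h0; rw [hwt1] at h1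
      obtain ⟨hz0, hz1⟩ := ACIAux.rot_kernel (c j - α k) (s j) _ _ (hsne j) h0 h1
      obtain ⟨bv, hb⟩ := b
      interval_cases bv
      · exact hp hz0
      · exact hp hz1
    have hwtne : wt k ≠ 0 := by
      intro h
      rw [h] at hblock
      exact hblock ⟨rfl, rfl⟩
    have hwtpos : 0 < ‖wt k‖ := norm_pos_iff.mpr hwtne
    have hwk : w k = ‖wt k‖⁻¹ • wt k := hw k
    have hwk1 : ‖w k‖ = 1 := by rw [hwk]; exact norm_smul_inv_norm hwtne
    have hwrot : ∃ p : Fin m × Fin 2, w k (Sum.inl p) ≠ 0 := by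
      have hor : wt k (Sum.inl (j, 0)) ≠ 0 ∨ wt k (Sum.inl (j, 1)) ≠ 0 := by tauto
      have hinv : (‖wt k‖)⁻¹ ≠ 0 := inv_ne_zero (ne_of_gt hwtpos)
      rcases hor with h | h
      · refine ⟨(j, 0), ?_⟩
        rw [hwk]
        simp only [PiLp.smul_apply, smul_eq_mul]
        exact mul_ne_zero hinv h
      · refine ⟨(j, 1), ?_⟩
        rw [hwk]
        simp only [PiLp.smul_apply, smul_eq_mul]
        exact mul_ne_zero hinv h
    have hβk : β k = (inner ℝ (w k) (mulv (blockRot m e c s) (w k)) : ℝ) := hβ k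
    have hβlo : c j0 ≤ β k := by
      rw [hβk]; exact (ACIAux.ray_bounds c s (c j0) hdd_lo hdd_hi (w k) hwk1).1
    obtain ⟨pw, hpw⟩ := hwrot
    have hβhi : β k < 1 := by
      rw [hβk]; exact ACIAux.ray_lt_one c s hdd_hi (w k) hwk1 pw hpw (hc1 pw.1)
    have hβpos : 0 < β k := lt_of_lt_of_le hc0L hβlo
    have hwt2 : ‖wt k‖ ^ 2 = 1 - α k ^ 2 := hwt_norm
    have h1a2 : 0 < 1 - α k ^ 2 := by rw [← hwt2]; positivity
    have hscale : ∀ X : ℝ, ‖wt k‖⁻¹ * (‖wt k‖⁻¹ * X) * ‖wt k‖ ^ 2 = X := by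
      intro X
      have hn : ‖wt k‖ ≠ 0 := ne_of_gt hwtpos
      have h' : ‖wt k‖⁻¹ * (‖wt k‖⁻¹ * X) * ‖wt k‖ ^ 2
          = X * (‖wt k‖ * ‖wt k‖⁻¹) * (‖wt k‖ * ‖wt k‖⁻¹) := by ring
      rw [h', mul_inv_cancel₀ hn]; ring
    have hbr : β k * ‖wt k‖ ^ 2 = (inner ℝ (wt k) (mulv (blockRot m e c s) (wt k)) : ℝ) := by
      rw [hβk, hwk, ACIAux.mulv_smul, real_inner_smul_left, real_inner_smul_right]
      exact hscale _
    have I1 : 2 * (α k - β k) * (1 - α k ^ 2) = α k * Ev := by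
      rw [hwt2] at hbr
      linarith [hwt_id, hbr]
    have hEnn : (0:ℝ) ≤ Ev := by rw [hEvdef]; exact sq_nonneg _
    have hβle : β k ≤ α k := by
      have h4 : 0 ≤ 2 * (α k - β k) * (1 - α k ^ 2) := by
        rw [I1]; exact mul_nonneg hαpos.le hEnn
      have h5 : (0:ℝ) ≤ 2 * (α k - β k) :=
        le_of_mul_le_mul_right (by linarith [h4]) h1a2
      linarith
    -- second half with Aᵀ
    have hATA' : ∀ y, mulv ((blockRot m e c s)ᵀ)ᵀ (mulv (blockRot m e c s)ᵀ y) = y := by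
      intro y; rw [Matrix.transpose_transpose]; exact ACIAux.AAT c s hcs y
    have hAAT' : ∀ y, mulv (blockRot m e c s)ᵀ (mulv ((blockRot m e c s)ᵀ)ᵀ y) = y := by
      intro y; rw [Matrix.transpose_transpose]; exact ACIAux.ATA c s hcs y
    have hβk' : β k = (inner ℝ (w k) (mulv (blockRot m e c s)ᵀ (w k)) : ℝ) := by
      rw [hβk, ACIAux.inner_symm_op]
    obtain ⟨hvt_norm, hvt_id⟩ := ACIAux.step (blockRot m e c s)ᵀ hATA' hAAT' (w k) hwk1 (β k) hβk'
    have hvtk : vt (k+1) = mulv (blockRot m e c s)ᵀ (w k) - β k • w k := hvt k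
    rw [← hvtk] at hvt_norm hvt_id
    set Ew : ℝ := ‖(mulv (blockRot m e c s)ᵀ (w k) + mulv ((blockRot m e c s)ᵀ)ᵀ (w k))
        - (2 * β k) • w k‖ ^ 2 with hEwdef
    -- block coordinates of vt in block pw.1
    obtain ⟨jw, bw⟩ := pw
    have hvt0 : vt (k+1) (Sum.inl (jw, 0)) =
        (c jw - β k) * w k (Sum.inl (jw, 0)) + (-(s jw)) * w k (Sum.inl (jw, 1)) := by
      rw [hvtk]
      simp only [PiLp.sub_apply, PiLp.smul_apply, smul_eq_mul]
      rw [ACIAux.mulvAT0 c s (w k) jw]; ring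
    have hvt1 : vt (k+1) (Sum.inl (jw, 1)) =
        -(-(s jw)) * w k (Sum.inl (jw, 0)) + (c jw - β k) * w k (Sum.inl (jw, 1)) := by
      rw [hvtk]
      simp only [PiLp.sub_apply, PiLp.smul_apply, smul_eq_mul]
      rw [ACIAux.mulvAT1 c s (w k) jw]; ring
    have hblock' : ¬ (vt (k+1) (Sum.inl (jw, 0)) = 0 ∧ vt (k+1) (Sum.inl (jw, 1)) = 0) := by
      rintro ⟨h0, h1⟩
      rw [hvt0] at h0; rw [hvt1] at h1
      obtain ⟨hz0, hz1⟩ := ACIAux.rot_kernel (c jw - β k) (-(s jw)) _ _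
        (neg_ne_zero.mpr (hsne jw)) h0 h1
      obtain ⟨bv, hb⟩ := bw
      interval_cases bv
      · exact hpw hz0
      · exact hpw hz1
    have hvtne : vt (k+1) ≠ 0 := by
      intro h
      rw [h] at hblock'
      exact hblock' ⟨rfl, rfl⟩
    have hvtpos : 0 < ‖vt (k+1)‖ := norm_pos_iff.mpr hvtne
    have hvk' : v (k+1) = ‖vt (k+1)‖⁻¹ • vt (k+1) := hv k
    have hv11 : ‖v (k+1)‖ = 1 := by rw [hvk']; exact norm_smul_inv_norm hvtne
    have hv1rot : ∃ p : Fin m × Fin 2, v (k+1) (Sum.inl p) ≠ 0 := by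
      have hor : vt (k+1) (Sum.inl (jw, 0)) ≠ 0 ∨ vt (k+1) (Sum.inl (jw, 1)) ≠ 0 := by tauto
      have hinv : (‖vt (k+1)‖)⁻¹ ≠ 0 := inv_ne_zero (ne_of_gt hvtpos)
      rcases hor with h | h
      · refine ⟨(jw, 0), ?_⟩
        rw [hvk']
        simp only [PiLp.smul_apply, smul_eq_mul]
        exact mul_ne_zero hinv h
      · refine ⟨(jw, 1), ?_⟩
        rw [hvk']
        simp only [PiLp.smul_apply, smul_eq_mul]
        exact mul_ne_zero hinv h
    -- α (k+1) ≤ β k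
    have hαk1 : α (k+1) = (inner ℝ (v (k+1)) (mulv (blockRot m e c s) (v (k+1))) : ℝ) := hα (k+1)
    have hvt2 : ‖vt (k+1)‖ ^ 2 = 1 - β k ^ 2 := hvt_norm
    have h1b2 : 0 < 1 - β k ^ 2 := by rw [← hvt2]; positivity
    have hscale' : ∀ X : ℝ, ‖vt (k+1)‖⁻¹ * (‖vt (k+1)‖⁻¹ * X) * ‖vt (k+1)‖ ^ 2 = X := by
      intro X
      have hn : ‖vt (k+1)‖ ≠ 0 := ne_of_gt hvtpos
      have h' : ‖vt (k+1)‖⁻¹ * (‖vt (k+1)‖⁻¹ * X) * ‖vt (k+1)‖ ^ 2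
          = X * (‖vt (k+1)‖ * ‖vt (k+1)‖⁻¹) * (‖vt (k+1)‖ * ‖vt (k+1)‖⁻¹) := by ring
      rw [h', mul_inv_cancel₀ hn]; ring
    have har : α (k+1) * ‖vt (k+1)‖ ^ 2 =
        (inner ℝ (vt (k+1)) (mulv (blockRot m e c s) (vt (k+1))) : ℝ) := by
      rw [hαk1, hvk', ACIAux.mulv_smul, real_inner_smul_left, real_inner_smul_right]
      exact hscale' _
    have hsym : (inner ℝ (vt (k+1)) (mulv (blockRot m e c s) (vt (k+1))) : ℝ) =
        (inner ℝ (vt (k+1)) (mulv (blockRot m e c s)ᵀ (vt (k+1))) : ℝ) :=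
      (ACIAux.inner_symm_op (blockRot m e c s) (vt (k+1))).symm
    have hEnn' : (0:ℝ) ≤ Ew := by rw [hEwdef]; exact sq_nonneg _
    have hα1le : α (k+1) ≤ β k := by
      rw [hvt2] at har
      have h6 : 0 ≤ β k * Ew := mul_nonneg hβpos.le hEnn'
      have h7 : α (k+1) * (1 - β k ^ 2) ≤ β k * (1 - β k ^ 2) := by
        linarith [har, hsym, hvt_id, h6]
      exact le_of_mul_le_mul_right h7 h1b2
    exact ⟨⟨hv11, hv1rot⟩, ⟨hα1le, hβle⟩, I1⟩
  -- the invariant holds for all k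
  have hGood : ∀ k, ‖v k‖ = 1 ∧ ∃ p : Fin m × Fin 2, v k (Sum.inl p) ≠ 0 := by
    intro k
    induction k with
    | zero =>
      refine ⟨hv0, ?_⟩
      by_contra hno
      push_neg at hno
      have hfix : mulv (blockRot m e c s) (v 0) = v 0 := by
        ext i
        match i with
        | Sum.inl (a, ⟨0, _⟩) =>
          rw [show ((Sum.inl (a, ⟨0, by norm_num⟩)) : (Fin m × Fin 2) ⊕ Fin e) = Sum.inl (a, 0)
            from rfl, ACIAux.mulvA0 c s (v 0) a, hno (a, 0), hno (a, 1)]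
          ring
        | Sum.inl (a, ⟨1, _⟩) =>
          rw [show ((Sum.inl (a, ⟨1, by norm_num⟩)) : (Fin m × Fin 2) ⊕ Fin e) = Sum.inl (a, 1)
            from rfl, ACIAux.mulvA1 c s (v 0) a, hno (a, 0), hno (a, 1)]
          ring
        | Sum.inr i => exact ACIAux.mulvAr c s (v 0) i
      have h1mem : vgrade (blockRot m e c s) (v 0) ≤ 1 := by
        apply Nat.sInf_le
        refine ⟨X - C 1, Polynomial.X_sub_C_ne_zero 1, Polynomial.natDegree_X_sub_C 1, ?_⟩
        have haev : (aeval (blockRot m e c s) (X - C 1 : ℝ[X])) =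
            blockRot m e c s - 1 := by
          simp [map_sub]
        rw [haev, ACIAux.mulv_subM, ACIAux.mulv_one, hfix, sub_self]
      omega
    | succ k ih => exact (hstep k ih).1
  have hαbounds : ∀ k, c j0 ≤ α k ∧ α k < 1 := by
    intro k
    obtain ⟨h1, p, hp⟩ := hGood k
    constructor
    · rw [hα k]; exact (ACIAux.ray_bounds c s (c j0) hdd_lo hdd_hi (v k) h1).1
    · rw [hα k]; exact ACIAux.ray_lt_one c s hdd_hi (v k) h1 p hp (hc1 p.1)
  have hchain : ∀ k, α (k+1) ≤ β k ∧ β k ≤ α k := fun k => (hstep k (hGood k)).2.1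
  have hI1 : ∀ k, 2 * (α k - β k) * (1 - α k ^ 2) =
      α k * ‖(mulv (blockRot m e c s) (v k) + mulv (blockRot m e c s)ᵀ (v k))
               - (2 * α k) • v k‖ ^ 2 := fun k => (hstep k (hGood k)).2.2
  have hanti : Antitone α := antitone_nat_of_succ_le fun k => (hchain k).1.trans (hchain k).2
  set L : ℝ := ⨅ k, α k with hLdef
  have hbdd : BddBelow (Set.range α) := ⟨c j0, by rintro x ⟨k, rfl⟩; exact (hαbounds k).1⟩
  have hαlim : Tendsto α atTop (𝓝 L) := tendsto_atTop_ciInf hanti hbdd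
  have hαlim1 : Tendsto (fun k => α (k+1)) atTop (𝓝 L) := hαlim.comp (tendsto_add_atTop_nat 1)
  have hβlim : Tendsto β atTop (𝓝 L) :=
    tendsto_of_tendsto_of_tendsto_of_le_of_le hαlim1 hαlim (fun k => (hchain k).1)
      fun k => (hchain k).2
  have hL1 : L < 1 := lt_of_le_of_lt (ciInf_le hbdd 0) (hαbounds 0).2
  have hE0 : Tendsto (fun k =>
      ‖(mulv (blockRot m e c s) (v k) + mulv (blockRot m e c s)ᵀ (v k))
        - (2 * α k) • v k‖ ^ 2) atTop (𝓝 0) := by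
    apply squeeze_zero (g := fun k => 2 / c j0 * (α k - β k)) (fun k => by positivity) ?_ ?_
    · intro k
      have h1 := hI1 k
      set Nk : ℝ := ‖(mulv (blockRot m e c s) (v k) + mulv (blockRot m e c s)ᵀ (v k))
          - (2 * α k) • v k‖ ^ 2 with hNkdef
      have hNn : (0:ℝ) ≤ Nk := by rw [hNkdef]; exact sq_nonneg _
      have hab : (0:ℝ) ≤ α k - β k := sub_nonneg.mpr (hchain k).2
      show Nk ≤ 2 / c j0 * (α k - β k)
      rw [div_mul_eq_mul_div, le_div_iff₀ hc0L]
      have s1 : Nk * c j0 ≤ Nk * α k := mul_le_mul_of_nonneg_left (hαbounds k).1 hNn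
      have s3 : 2 * (α k - β k) * (1 - α k ^ 2) ≤ 2 * (α k - β k) * 1 := by
        apply mul_le_mul_of_nonneg_left _ (by linarith)
        have := sq_nonneg (α k)
        linarith
      linarith [s1, h1, s3]
    · have := (hαlim.sub hβlim).const_mul (2 / c j0)
      simpa using this
  obtain ⟨φ, hφ, hφlim⟩ := hlim
  have hφtop : Tendsto φ atTop atTop := hφ.tendsto_atTop
  have hαφ : Tendsto (fun k => α (φ k)) atTop (𝓝 L) := hαlim.comp hφtop
  have hvec : Tendsto (fun k =>
      (mulv (blockRot m e c s) (v (φ k)) + mulv (blockRot m e c s)ᵀ (v (φ k)))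
        - (2 * α (φ k)) • v (φ k)) atTop
      (𝓝 ((mulv (blockRot m e c s) vstar + mulv (blockRot m e c s)ᵀ vstar)
        - (2 * L) • vstar)) := by
    apply Tendsto.sub
    · exact (((ACIAux.mulv_continuous (blockRot m e c s)).tendsto vstar).comp hφlim).add
        (((ACIAux.mulv_continuous (blockRot m e c s)ᵀ).tendsto vstar).comp hφlim)
    · exact (hαφ.const_mul 2).smul hφlim
  have hnormlim : Tendsto (fun k =>
      ‖(mulv (blockRot m e c s) (v (φ k)) + mulv (blockRot m e c s)ᵀ (v (φ k)))
        - (2 * α (φ k)) • v (φ k)‖ ^ 2) atTop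
      (𝓝 (‖(mulv (blockRot m e c s) vstar + mulv (blockRot m e c s)ᵀ vstar)
        - (2 * L) • vstar‖ ^ 2)) := ((continuous_norm.tendsto _).comp hvec).pow 2
  have hX2 : ‖(mulv (blockRot m e c s) vstar + mulv (blockRot m e c s)ᵀ vstar)
      - (2 * L) • vstar‖ ^ 2 = 0 := tendsto_nhds_unique hnormlim (hE0.comp hφtop)
  have heig : mulv (blockRot m e c s) vstar + mulv (blockRot m e c s)ᵀ vstar
      = (2 * L) • vstar := by
    have := norm_eq_zero.mp ((pow_eq_zero_iff two_ne_zero).mp hX2)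
    exact sub_eq_zero.mp this
  have hvs1 : ‖vstar‖ = 1 := by
    have h1 : Tendsto (fun k => ‖v (φ k)‖) atTop (𝓝 ‖vstar‖) :=
      (continuous_norm.tendsto _).comp hφlim
    have h2 : (fun k => ‖v (φ k)‖) = fun _ => (1 : ℝ) := funext fun k => (hGood (φ k)).1
    rw [h2] at h1
    exact tendsto_nhds_unique h1 tendsto_const_nhds
  have hvsne : vstar ≠ 0 := by
    intro h
    rw [h, norm_zero] at hvs1
    exact one_ne_zero hvs1.symm
  have hcoord : ∀ i, 2 * ACIAux.dd c i * vstar i = 2 * L * vstar i := by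
    intro i
    have h := congrArg (fun z : EuclideanSpace ℝ ((Fin m × Fin 2) ⊕ Fin e) => z i) heig
    simp only [PiLp.add_apply, PiLp.smul_apply, smul_eq_mul] at h
    rw [ACIAux.sumAT_apply c s vstar i] at h
    exact h
  have hinr : ∀ i : Fin e, vstar (Sum.inr i) = 0 := by
    intro i
    have h := hcoord (Sum.inr i)
    have hdd1 : ACIAux.dd (e := e) c (Sum.inr i) = 1 := rfl
    rw [hdd1] at h
    have h2 : (2 - 2 * L) * vstar (Sum.inr i) = 0 := by linarith
    rcases mul_eq_zero.mp h2 with h3 | h3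
    · linarith
    · exact h3
  have hvexists : ∃ i, vstar i ≠ 0 := by
    by_contra h
    push_neg at h
    exact hvsne (by ext i; exact h i)
  obtain ⟨i0, hi0⟩ := hvexists
  obtain ⟨⟨j, b⟩ | i, rfl⟩ : ∃ i, i0 = i := ⟨i0, rfl⟩
  swap
  · exact absurd (hinr i) hi0
  have hcjL : c j = L := by
    have h := hcoord (Sum.inl (j, b))
    have hddc : ACIAux.dd (e := e) c (Sum.inl (j, b)) = c j := rfl
    rw [hddc] at h
    have h2 : (2 * c j - 2 * L) * vstar (Sum.inl (j, b)) = 0 := by linarith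
    rcases mul_eq_zero.mp h2 with h3 | h3
    · linarith
    · exact absurd h3 hi0
  have hsupp : ∀ x : (Fin m × Fin 2) ⊕ Fin e,
      (∀ i : Fin 2, x ≠ Sum.inl (j, i)) → vstar x = 0 := by
    rintro (⟨a, b'⟩ | i) hx
    · by_cases haj : a = j
      · exact absurd (by rw [haj]) (hx b')
      · have h := hcoord (Sum.inl (a, b'))
        have hddc : ACIAux.dd (e := e) c (Sum.inl (a, b')) = c a := rfl
        rw [hddc] at h
        have h2 : (2 * c a - 2 * L) * vstar (Sum.inl (a, b')) = 0 := by linarith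
        rcases mul_eq_zero.mp h2 with h3 | h3
        · exfalso
          apply haj
          apply hmono.injective
          rw [hcjL]
          linarith
        · exact h3
    · exact hinr i
  have hx12 : ¬ (vstar (Sum.inl (j, 0)) = 0 ∧ vstar (Sum.inl (j, 1)) = 0) := by
    rintro ⟨h0, h1⟩
    obtain ⟨bv, hb⟩ := b
    interval_cases bv
    · exact hi0 h0
    · exact hi0 h1
  constructor
  · -- vgrade = 2
    have h2mem : (2 : ℕ) ∈ {d | ∃ p : ℝ[X], p ≠ 0 ∧ p.natDegree = d ∧
        mulv (aeval (blockRot m e c s) p) vstar = 0} := by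
      have hdeg : (X ^ 2 - C (2 * c j) * X + C 1 : ℝ[X]).natDegree = 2 := by
        have hrw : (X ^ 2 - C (2 * c j) * X + C 1 : ℝ[X])
            = C 1 * X ^ 2 + C (-(2 * c j)) * X + C 1 := by
          simp [map_neg]; ring
        rw [hrw, Polynomial.natDegree_quadratic one_ne_zero]
      refine ⟨X ^ 2 - C (2 * c j) * X + C 1, ?_, hdeg, ?_⟩
      · intro h
        rw [h] at hdeg
        simp at hdeg
      · have haev : (aeval (blockRot m e c s) (X ^ 2 - C (2 * c j) * X + C 1 : ℝ[X]))
            = blockRot m e c s * blockRot m e c s - (2 * c j) • blockRot m e c s + 1 := by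
          simp only [_root_.map_add, _root_.map_sub, _root_.map_mul, map_pow,
            Polynomial.aeval_X, Polynomial.aeval_C, Algebra.algebraMap_eq_smul_one,
            smul_mul_assoc, one_mul, one_smul, pow_two, smul_smul]
        rw [haev, ACIAux.mulv_addM, ACIAux.mulv_subM, ACIAux.mulv_smulM,
          ← ACIAux.mulv_mulv, ACIAux.mulv_one]
        ext i
        simp only [PiLp.add_apply, PiLp.sub_apply, PiLp.smul_apply, smul_eq_mul,
          PiLp.zero_apply]
        match i with
        | Sum.inl (a, ⟨0, _⟩) =>
          rw [show ((Sum.inl (a, ⟨0, by norm_num⟩)) : (Fin m × Fin 2) ⊕ Fin e) = Sum.inl (a, 0)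
            from rfl]
          rw [ACIAux.mulvA0 c s (mulv (blockRot m e c s) vstar) a,
            ACIAux.mulvA0 c s vstar a, ACIAux.mulvA1 c s vstar a]
          by_cases haj : a = j
          · rw [← haj]
            linear_combination (-(vstar (Sum.inl (a, 0)))) * hcs a
          · have h0 : vstar (Sum.inl (a, 0)) = 0 := hsupp _ (by
              intro i hi
              exact haj (by injection hi with h'; exact (Prod.mk.injEq _ _ _ _ ▸ h' : _) |>.1))
            have h1 : vstar (Sum.inl (a, 1)) = 0 := hsupp _ (by
              intro i hi
              exact haj (by injection hi with h'; exact (Prod.mk.injEq _ _ _ _ ▸ h' : _) |>.1))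
            rw [h0, h1]; ring
        | Sum.inl (a, ⟨1, _⟩) =>
          rw [show ((Sum.inl (a, ⟨1, by norm_num⟩)) : (Fin m × Fin 2) ⊕ Fin e) = Sum.inl (a, 1)
            from rfl]
          rw [ACIAux.mulvA1 c s (mulv (blockRot m e c s) vstar) a,
            ACIAux.mulvA0 c s vstar a, ACIAux.mulvA1 c s vstar a]
          by_cases haj : a = j
          · rw [← haj]
            linear_combination (-(vstar (Sum.inl (a, 1)))) * hcs a
          · have h0 : vstar (Sum.inl (a, 0)) = 0 := hsupp _ (by
              intro i hi
              exact haj (by injection hi with h'; exact (Prod.mk.injEq _ _ _ _ ▸ h' : _) |>.1))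
            have h1 : vstar (Sum.inl (a, 1)) = 0 := hsupp _ (by
              intro i hi
              exact haj (by injection hi with h'; exact (Prod.mk.injEq _ _ _ _ ▸ h' : _) |>.1))
            rw [h0, h1]; ring
        | Sum.inr i =>
          rw [ACIAux.mulvAr c s (mulv (blockRot m e c s) vstar) i,
            ACIAux.mulvAr c s vstar i, hinr i]
          ring
    have hSne : {d | ∃ p : ℝ[X], p ≠ 0 ∧ p.natDegree = d ∧
        mulv (aeval (blockRot m e c s) p) vstar = 0}.Nonempty := ⟨2, h2mem⟩
    have hmem := Nat.sInf_mem hSne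
    have hle : vgrade (blockRot m e c s) vstar ≤ 2 := Nat.sInf_le h2mem
    obtain ⟨p, hpne, hpdeg, hpz⟩ := hmem
    have hne0 : vgrade (blockRot m e c s) vstar ≠ 0 := by
      intro h
      have hd0 : p.natDegree = 0 := by rw [hpdeg]; exact h
      have hpc := Polynomial.eq_C_of_natDegree_eq_zero hd0
      have hc0' : p.coeff 0 ≠ 0 := by
        intro hcc
        rw [hcc, map_zero] at hpc
        exact hpne hpc
      rw [hpc] at hpz
      have : mulv (aeval (blockRot m e c s) (C (p.coeff 0))) vstar = p.coeff 0 • vstar := by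
        rw [Polynomial.aeval_C, Algebra.algebraMap_eq_smul_one, ACIAux.mulv_smulM,
          ACIAux.mulv_one]
      rw [this] at hpz
      rcases smul_eq_zero.mp hpz with h' | h'
      · exact hc0' h'
      · exact hvsne h'
    have hne1 : vgrade (blockRot m e c s) vstar ≠ 1 := by
      intro h
      have hd1 : p.natDegree = 1 := by rw [hpdeg]; exact h
      have hpc := Polynomial.eq_X_add_C_of_natDegree_le_one hd1.le
      have ha : p.coeff 1 ≠ 0 := by
        have := Polynomial.leadingCoeff_ne_zero.mpr hpne
        rwa [Polynomial.leadingCoeff, hd1] at this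
      rw [hpc] at hpz
      have hform : mulv (aeval (blockRot m e c s) (C (p.coeff 1) * X + C (p.coeff 0))) vstar
          = p.coeff 1 • mulv (blockRot m e c s) vstar + p.coeff 0 • vstar := by
        simp only [_root_.map_add, _root_.map_mul, Polynomial.aeval_X, Polynomial.aeval_C,
          Algebra.algebraMap_eq_smul_one, smul_mul_assoc, one_mul]
        rw [ACIAux.mulv_addM, ACIAux.mulv_smulM, ACIAux.mulv_smulM, ACIAux.mulv_one]
      rw [hform] at hpz
      have e0 := congrArg (fun z : EuclideanSpace ℝ ((Fin m × Fin 2) ⊕ Fin e)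
        => z (Sum.inl (j, 0))) hpz
      have e1 := congrArg (fun z : EuclideanSpace ℝ ((Fin m × Fin 2) ⊕ Fin e)
        => z (Sum.inl (j, 1))) hpz
      simp only [PiLp.add_apply, PiLp.smul_apply, smul_eq_mul, PiLp.zero_apply] at e0 e1
      rw [ACIAux.mulvA0 c s vstar j] at e0
      rw [ACIAux.mulvA1 c s vstar j] at e1
      have hkey : (s j * p.coeff 1) * (vstar (Sum.inl (j, 0)) ^ 2
          + vstar (Sum.inl (j, 1)) ^ 2) = 0 := by
        linear_combination vstar (Sum.inl (j, 1)) * e0 - vstar (Sum.inl (j, 0)) * e1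
      have hsa : s j * p.coeff 1 ≠ 0 := mul_ne_zero (hsne j) ha
      have hxx : vstar (Sum.inl (j, 0)) ^ 2 + vstar (Sum.inl (j, 1)) ^ 2 = 0 := by
        rcases mul_eq_zero.mp hkey with h' | h'
        · exact absurd h' hsa
        · exact h'
      apply hx12
      constructor
      · nlinarith [sq_nonneg (vstar (Sum.inl (j, 0))), sq_nonneg (vstar (Sum.inl (j, 1)))]
      · nlinarith [sq_nonneg (vstar (Sum.inl (j, 0))), sq_nonneg (vstar (Sum.inl (j, 1)))]
    omega
  · -- unique j
    refine ⟨j, ⟨?_, ?_, ?_⟩, ?_⟩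
    · rw [hcjL]; exact hαlim
    · rw [hcjL]; exact hβlim
    · intro x hx
      exact hsupp x hx
    · rintro j' ⟨hj', -, -⟩
      have : c j' = L := tendsto_nhds_unique hj' hαlim
      exact hmono.injective (this.trans hcjL.symm)
end
end

section
/- Let A ∈ ℝ^{n×n}. Then min over α ∈ ℝ of the operator norm ‖A − αI‖ equals max over unit vectors v ∈ ℝⁿ of (‖Av‖² − ⟨v, Av⟩²)^{1/2}. -/
open Polynomial Filter Topology Matrix

noncomputable section

set_option linter.unusedSectionVars false

section Aux

open Filter Topology ContinuousLinearMap

variable {E : Type*} [NormedAddCommGroup E] [InnerProductSpace ℝ E] [FiniteDimensional ℝ E]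

lemma my_exists_max_norm [Nontrivial E] (T : E →L[ℝ] E) : ∃ v : E, ‖v‖ = 1 ∧ ‖T v‖ = ‖T‖ := by
  obtain ⟨v, hv, hmax⟩ := (isCompact_sphere (0 : E) 1).exists_isMaxOn
    (NormedSpace.sphere_nonempty.mpr zero_le_one) (T.continuous.norm.continuousOn)
  have hv1 : ‖v‖ = 1 := mem_sphere_zero_iff_norm.mp hv
  refine ⟨v, hv1, le_antisymm (by simpa [hv1] using T.le_opNorm v) ?_⟩
  refine T.opNorm_le_bound (norm_nonneg _) fun x => ?_
  rcases eq_or_ne x 0 with rfl | hx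
  · simp
  · have hmem : (‖x‖⁻¹ : ℝ) • x ∈ Metric.sphere (0 : E) 1 := by
      simpa [mem_sphere_zero_iff_norm] using norm_smul_inv_norm (𝕜 := ℝ) hx
    have h : ‖x‖⁻¹ * ‖T x‖ ≤ ‖T v‖ := by
      have h0 := hmax hmem
      simp only [Set.mem_setOf_eq, _root_.map_smul, norm_smul, norm_inv, norm_norm] at h0
      exact h0
    have hxpos : 0 < ‖x‖ := norm_pos_iff.mpr hx
    calc ‖T x‖ = ‖x‖ * (‖x‖⁻¹ * ‖T x‖) := by field_simp
      _ ≤ ‖x‖ * ‖T v‖ := mul_le_mul_of_nonneg_left h hxpos.le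
      _ = ‖T v‖ * ‖x‖ := mul_comm _ _

lemma my_eigen_of_max (T : E →L[ℝ] E) {v : E} (hv : ‖v‖ = 1) (hTv : ‖T v‖ = ‖T‖) :
    (ContinuousLinearMap.adjoint T ∘L T) v = (‖T‖ ^ 2 : ℝ) • v := by
  haveI : CompleteSpace E := FiniteDimensional.complete ℝ E
  set S := ContinuousLinearMap.adjoint T ∘L T with hS
  have h1 : (inner ℝ v (S v) : ℝ) = ‖T v‖ ^ 2 := by
    rw [hS, ContinuousLinearMap.comp_apply, ContinuousLinearMap.adjoint_inner_right,
      real_inner_self_eq_norm_sq]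
  have h2 : ‖S v‖ ≤ ‖T‖ ^ 2 := by
    have := S.le_opNorm v
    rwa [hv, mul_one, hS, norm_adjoint_comp_self, ← sq] at this
  have h3 : (inner ℝ v (S v) : ℝ) ≤ ‖v‖ * ‖S v‖ := real_inner_le_norm _ _
  rw [hv, one_mul] at h3
  have h4 : ‖S v‖ = ‖T‖ ^ 2 := le_antisymm h2 (by rw [← hTv, ← h1]; exact h3)
  have h5 : (inner ℝ v (S v) : ℝ) = ‖v‖ * ‖S v‖ := by rw [hv, one_mul, h4, h1, hTv]
  have h6 := inner_eq_norm_mul_iff_real.mp h5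
  rw [hv, one_smul, h4] at h6
  exact h6.symm

lemma my_expand (T : E →L[ℝ] E) (β : ℝ) {v : E} (hv : ‖v‖ = 1) :
    ‖(T - β • (1 : E →L[ℝ] E)) v‖ ^ 2 = ‖T v‖ ^ 2 - 2 * β * (inner ℝ v (T v) : ℝ) + β ^ 2 := by
  have h : (T - β • (1 : E →L[ℝ] E)) v = T v - β • v := by
    simp [ContinuousLinearMap.sub_apply, ContinuousLinearMap.smul_apply]
  rw [h, norm_sub_sq_real, real_inner_smul_right, real_inner_comm, norm_smul, hv, mul_one,
    Real.norm_eq_abs, sq_abs]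
  ring

lemma my_step_A [Nontrivial E] (M : E →L[ℝ] E)
    (hmin : ∀ ε : ℝ, ‖M‖ ≤ ‖M - ε • (1 : E →L[ℝ] E)‖) :
    ∃ v : E, ‖v‖ = 1 ∧ ‖M v‖ = ‖M‖ ∧ (inner ℝ v (M v) : ℝ) ≤ 0 := by
  have hseq : ∀ k : ℕ, ∃ v : E, ‖v‖ = 1 ∧ ‖M‖ - 1 / ((k : ℝ) + 1) ≤ ‖M v‖ ∧
      (inner ℝ v (M v) : ℝ) ≤ 1 / ((k : ℝ) + 1) := by
    intro k
    set ε : ℝ := 1 / ((k : ℝ) + 1) with hε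
    have hεpos : 0 < ε := by positivity
    obtain ⟨v, hv1, hv2⟩ := my_exists_max_norm (M - ε • (1 : E →L[ℝ] E))
    have h1 : ‖M‖ ≤ ‖(M - ε • (1 : E →L[ℝ] E)) v‖ := hv2 ▸ hmin ε
    have hq : ‖(M - ε • (1 : E →L[ℝ] E)) v‖ ^ 2
        = ‖M v‖ ^ 2 - 2 * ε * (inner ℝ v (M v) : ℝ) + ε ^ 2 := my_expand M ε hv1
    have h3 : ‖M v‖ ≤ ‖M‖ := by simpa [hv1] using M.le_opNorm v
    refine ⟨v, hv1, ?_, ?_⟩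
    · have h2 : ‖(M - ε • (1 : E →L[ℝ] E)) v‖ ≤ ‖M v‖ + ε := by
        have : (M - ε • (1 : E →L[ℝ] E)) v = M v - ε • v := by
          simp [ContinuousLinearMap.sub_apply, ContinuousLinearMap.smul_apply]
        rw [this]
        calc ‖M v - ε • v‖ ≤ ‖M v‖ + ‖ε • v‖ := norm_sub_le _ _
          _ = ‖M v‖ + ε := by rw [norm_smul, hv1, mul_one, Real.norm_eq_abs, abs_of_pos hεpos]
      linarith
    · nlinarith [norm_nonneg (M v), opNorm_nonneg M, norm_nonneg ((M - ε • (1 : E →L[ℝ] E)) v)]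
  choose u hu1 hu2 hu3 using hseq
  have humem : ∀ k, u k ∈ Metric.sphere (0 : E) 1 := fun k =>
    mem_sphere_zero_iff_norm.mpr (hu1 k)
  obtain ⟨v, hvmem, φ, hφ, hconv⟩ := (isCompact_sphere (0 : E) 1).tendsto_subseq humem
  have hv1 : ‖v‖ = 1 := mem_sphere_zero_iff_norm.mp hvmem
  have htend0 : Tendsto (fun k : ℕ => 1 / ((φ k : ℝ) + 1)) atTop (𝓝 0) := by
    refine squeeze_zero (fun k => by positivity) (fun k => ?_)
      tendsto_one_div_add_atTop_nhds_zero_nat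
    have : (k:ℝ) ≤ (φ k : ℝ) := by exact_mod_cast hφ.le_apply
    gcongr
  have hMv : Tendsto (fun k => ‖M (u (φ k))‖) atTop (𝓝 ‖M v‖) :=
    ((M.continuous.tendsto v).comp hconv).norm
  have hnorm : ‖M v‖ = ‖M‖ := by
    refine le_antisymm (by simpa [hv1] using M.le_opNorm v) ?_
    have hlim : Tendsto (fun k : ℕ => ‖M‖ - 1 / ((φ k : ℝ) + 1)) atTop (𝓝 ‖M‖) := by
      simpa using tendsto_const_nhds.sub htend0
    exact le_of_tendsto_of_tendsto' hlim hMv fun k => hu2 (φ k)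
  have hinner : Tendsto (fun k => (inner ℝ (u (φ k)) (M (u (φ k))) : ℝ)) atTop
      (𝓝 (inner ℝ v (M v) : ℝ)) := by
    have hc : Continuous fun x : E => (inner ℝ x (M x) : ℝ) := continuous_id.inner M.continuous
    exact (hc.tendsto v).comp hconv
  have hq : (inner ℝ v (M v) : ℝ) ≤ 0 :=
    le_of_tendsto_of_tendsto' hinner htend0 fun k => hu3 (φ k)
  exact ⟨v, hv1, hnorm, hq⟩

lemma my_crux [Nontrivial E] (M : E →L[ℝ] E)
    (hmin : ∀ ε : ℝ, ‖M‖ ≤ ‖M - ε • (1 : E →L[ℝ] E)‖) :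
    ∃ v : E, ‖v‖ = 1 ∧ ‖M v‖ = ‖M‖ ∧ (inner ℝ v (M v) : ℝ) = 0 := by
  obtain ⟨v, hv1, hv2, hv3⟩ := my_step_A M hmin
  have hmin' : ∀ ε : ℝ, ‖-M‖ ≤ ‖-M - ε • (1 : E →L[ℝ] E)‖ := by
    intro ε
    have h1 : -M - ε • (1 : E →L[ℝ] E) = -(M - (-ε) • (1 : E →L[ℝ] E)) := by
      simp [neg_smul]; abel
    rw [norm_neg, h1, norm_neg]
    exact hmin (-ε)
  obtain ⟨w, hw1, hw2', hw3'⟩ := my_step_A (-M) hmin'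
  have hw2 : ‖M w‖ = ‖M‖ := by
    rw [ContinuousLinearMap.neg_apply, norm_neg, norm_neg] at hw2'; exact hw2'
  have hw3 : 0 ≤ (inner ℝ w (M w) : ℝ) := by
    rw [ContinuousLinearMap.neg_apply, inner_neg_right] at hw3'; linarith
  rcases eq_or_lt_of_le hv3 with hv0 | hvneg
  · exact ⟨v, hv1, hv2, hv0⟩
  rcases eq_or_lt_of_le hw3 with hw0 | hwpos
  · exact ⟨w, hw1, hw2, hw0.symm⟩
  by_cases hvw : v = -w
  · exfalso
    rw [hvw, _root_.map_neg, inner_neg_neg] at hvneg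
    linarith
  -- eigenvectors of S = M† M
  haveI : CompleteSpace E := FiniteDimensional.complete ℝ E
  set S := ContinuousLinearMap.adjoint M ∘L M with hS
  have hev : S v = (‖M‖ ^ 2 : ℝ) • v := my_eigen_of_max M hv1 hv2
  have hew : S w = (‖M‖ ^ 2 : ℝ) • w := my_eigen_of_max M hw1 hw2
  -- IVT
  set f : ℝ → ℝ := fun t => (inner ℝ ((1 - t) • v + t • w) (M ((1 - t) • v + t • w)) : ℝ) with hf
  have hcont : Continuous f := by
    have hz : Continuous fun t : ℝ => (1 - t) • v + t • w :=
      ((continuous_const.sub continuous_id).smul continuous_const).add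
        (continuous_id.smul continuous_const)
    exact hz.inner (M.continuous.comp hz)
  have hf0 : f 0 = (inner ℝ v (M v) : ℝ) := by simp [hf]
  have hf1 : f 1 = (inner ℝ w (M w) : ℝ) := by simp [hf]
  have hIcc : Set.Icc (f 0) (f 1) ⊆ f '' Set.Icc 0 1 :=
    intermediate_value_Icc zero_le_one hcont.continuousOn
  have h0mem : (0 : ℝ) ∈ Set.Icc (f 0) (f 1) := by
    rw [Set.mem_Icc, hf0, hf1]; exact ⟨hvneg.le, hwpos.le⟩
  obtain ⟨t, htmem, hft⟩ := hIcc h0mem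
  set z : E := (1 - t) • v + t • w with hzdef
  have hz0 : z ≠ 0 := by
    intro h0
    have h1 : (1 - t) • v = -(t • w) := eq_neg_of_add_eq_zero_left h0
    have h2 : |1 - t| = |t| := by
      have h2' := congrArg norm h1
      rwa [norm_neg, norm_smul, norm_smul, hv1, hw1, mul_one, mul_one,
        Real.norm_eq_abs, Real.norm_eq_abs] at h2'
    obtain ⟨ht0, ht1⟩ := htmem
    rw [abs_of_nonneg (by linarith), abs_of_nonneg ht0] at h2
    have htt : t = 1 / 2 := by linarith
    rw [hzdef, htt] at h0
    have h6 : (1 / 2 : ℝ) • (v + w) = 0 := by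
      rw [smul_add]; convert h0 using 2; norm_num
    have h7 : v + w = 0 := by
      rcases smul_eq_zero.mp h6 with h | h
      · norm_num at h
      · exact h
    exact hvw (eq_neg_of_add_eq_zero_left h7)
  -- the normalized vector
  set u : E := (‖z‖⁻¹ : ℝ) • z with hu
  have hzn : ‖z‖ ≠ 0 := norm_ne_zero_iff.mpr hz0
  have hu1 : ‖u‖ = 1 := norm_smul_inv_norm (𝕜 := ℝ) hz0
  have hSz : S z = (‖M‖ ^ 2 : ℝ) • z := by
    rw [hzdef, _root_.map_add, _root_.map_smul, _root_.map_smul, hev, hew, smul_add, smul_smul, smul_smul,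
      smul_smul, smul_smul, mul_comm]
    ring_nf
  have hMz2 : ‖M z‖ ^ 2 = (‖M‖ * ‖z‖) ^ 2 := by
    have h1 : (inner ℝ (M z) (M z) : ℝ) = inner ℝ z (S z) :=
      (ContinuousLinearMap.adjoint_inner_right M z (M z)).symm
    rw [hSz, real_inner_smul_right, real_inner_self_eq_norm_sq,
      real_inner_self_eq_norm_sq] at h1
    rw [h1]; ring
  have hMz : ‖M z‖ = ‖M‖ * ‖z‖ :=
    (sq_eq_sq₀ (norm_nonneg _) (by positivity)).mp hMz2
  have hMu : ‖M u‖ = ‖M‖ := by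
    rw [hu, _root_.map_smul, norm_smul, hMz, Real.norm_eq_abs, abs_of_nonneg (by positivity)]
    field_simp
  have hqu : (inner ℝ u (M u) : ℝ) = 0 := by
    rw [hu, _root_.map_smul, real_inner_smul_left, real_inner_smul_right]
    have : (inner ℝ z (M z) : ℝ) = 0 := by rw [← hft]
    rw [this, mul_zero, mul_zero]
  exact ⟨u, hu1, hMu, hqu⟩

lemma my_key [Nontrivial E] (T : E →L[ℝ] E) :
    sInf {r : ℝ | ∃ α : ℝ, r = ‖T - α • (1 : E →L[ℝ] E)‖} =
      sSup {r : ℝ | ∃ v : E, ‖v‖ = 1 ∧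
        r = Real.sqrt (‖T v‖ ^ 2 - (inner ℝ v (T v) : ℝ) ^ 2)} := by
  set S₁ : Set ℝ := {r : ℝ | ∃ α : ℝ, r = ‖T - α • (1 : E →L[ℝ] E)‖} with hS₁
  set S₂ : Set ℝ := {r : ℝ | ∃ v : E, ‖v‖ = 1 ∧
    r = Real.sqrt (‖T v‖ ^ 2 - (inner ℝ v (T v) : ℝ) ^ 2)} with hS₂
  have hS₁ne : S₁.Nonempty := ⟨‖T - (0 : ℝ) • (1 : E →L[ℝ] E)‖, 0, rfl⟩
  have hS₁bdd : BddBelow S₁ := ⟨0, fun r ⟨α, hα⟩ => hα ▸ norm_nonneg _⟩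
  -- easy direction: every element of S₂ ≤ every element of S₁
  have heasy : ∀ r ∈ S₂, ∀ b ∈ S₁, r ≤ b := by
    rintro r ⟨v, hv1, rfl⟩ b ⟨β, rfl⟩
    have hexp := my_expand T β hv1
    set c : ℝ := (inner ℝ v (T v) : ℝ) with hc
    have h1 : ‖T v‖ ^ 2 - c ^ 2 ≤ ‖(T - β • (1 : E →L[ℝ] E)) v‖ ^ 2 := by nlinarith [sq_nonneg (β - c)]
    calc Real.sqrt (‖T v‖ ^ 2 - c ^ 2) ≤ Real.sqrt (‖(T - β • (1 : E →L[ℝ] E)) v‖ ^ 2) :=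
        Real.sqrt_le_sqrt h1
      _ = ‖(T - β • (1 : E →L[ℝ] E)) v‖ := Real.sqrt_sq (norm_nonneg _)
      _ ≤ ‖T - β • (1 : E →L[ℝ] E)‖ := by
        simpa [hv1] using (T - β • (1 : E →L[ℝ] E)).le_opNorm v
  have hS₂bddAbove : BddAbove S₂ := by
    obtain ⟨b, hb⟩ := hS₁ne
    exact ⟨b, fun r hr => heasy r hr b hb⟩
  -- existence of a minimizer
  have hfc : Continuous fun α : ℝ => ‖T - α • (1 : E →L[ℝ] E)‖ :=
    (continuous_const.sub (continuous_id.smul continuous_const)).norm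
  have hcoer : Tendsto (fun α : ℝ => ‖T - α • (1 : E →L[ℝ] E)‖) (cocompact ℝ) atTop := by
    have h1 : Tendsto (fun α : ℝ => ‖α‖ + (-‖T‖)) (cocompact ℝ) atTop :=
      tendsto_atTop_add_const_right _ _ tendsto_norm_cocompact_atTop
    refine tendsto_atTop_mono (fun α => ?_) h1
    have h2 : ‖α • (1 : E →L[ℝ] E)‖ ≤ ‖T - α • (1 : E →L[ℝ] E)‖ + ‖T‖ := by
      calc ‖α • (1 : E →L[ℝ] E)‖ = ‖T - (T - α • (1 : E →L[ℝ] E))‖ := by rw [sub_sub_cancel]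
        _ ≤ ‖T‖ + ‖T - α • (1 : E →L[ℝ] E)‖ := norm_sub_le _ _
        _ = ‖T - α • (1 : E →L[ℝ] E)‖ + ‖T‖ := add_comm _ _
    have h3 : ‖α • (1 : E →L[ℝ] E)‖ = ‖α‖ := by
      have h4 := norm_smul (α := ℝ) (β := E →L[ℝ] E) α 1
      rw [h4, norm_one, mul_one]
    linarith [h3 ▸ h2]
  obtain ⟨α₀, hα₀⟩ := hfc.exists_forall_le hcoer
  set M : E →L[ℝ] E := T - α₀ • (1 : E →L[ℝ] E) with hM
  have hmin : ∀ ε : ℝ, ‖M‖ ≤ ‖M - ε • (1 : E →L[ℝ] E)‖ := by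
    intro ε
    have h1 : M - ε • (1 : E →L[ℝ] E) = T - (α₀ + ε) • (1 : E →L[ℝ] E) := by
      rw [hM, add_smul]; abel
    rw [h1]; exact hα₀ (α₀ + ε)
  obtain ⟨v, hv1, hv2, hv3⟩ := my_crux M hmin
  -- identify ‖M‖ as an element of S₂
  set c : ℝ := (inner ℝ v (T v) : ℝ) with hc
  have hαc : α₀ = c := by
    have h1 : (inner ℝ v (M v) : ℝ) = c - α₀ := by
      rw [hM]
      have h2 : (T - α₀ • (1 : E →L[ℝ] E)) v = T v - α₀ • v := by
        simp [ContinuousLinearMap.sub_apply, ContinuousLinearMap.smul_apply]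
      rw [h2, inner_sub_right, real_inner_smul_right, real_inner_self_eq_norm_sq, hv1]
      ring
    rw [h1] at hv3; linarith
  have hMv2 : ‖M v‖ ^ 2 = ‖T v‖ ^ 2 - c ^ 2 := by
    rw [hM, my_expand T α₀ hv1, hαc]; ring
  have hmem : ‖M‖ ∈ S₂ := by
    refine ⟨v, hv1, ?_⟩
    rw [← hv2, ← hc, ← hMv2, Real.sqrt_sq (norm_nonneg _)]
  have hS₂ne : S₂.Nonempty := ⟨‖M‖, hmem⟩
  refine le_antisymm ?_ ?_
  · calc sInf S₁ ≤ ‖M‖ := csInf_le hS₁bdd ⟨α₀, rfl⟩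
      _ ≤ sSup S₂ := le_csSup hS₂bddAbove hmem
  · exact csSup_le hS₂ne fun r hr => le_csInf hS₁ne fun b hb => heasy r hr b hb

open Matrix in
lemma my_mulv_eq {ι : Type*} [Fintype ι] [DecidableEq ι] (A : Matrix ι ι ℝ)
    (v : EuclideanSpace ℝ ι) :
    (WithLp.equiv 2 (ι → ℝ)).symm (A.mulVec ((WithLp.equiv 2 (ι → ℝ)) v))
      = Matrix.toEuclideanCLM (𝕜 := ℝ) A v := by
  rfl


end Aux

theorem ideal_arnoldi_s1 {n : ℕ} (A : Matrix (Fin n) (Fin n) ℝ) :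
    sInf {r : ℝ | ∃ α : ℝ, r = opNorm (A - α • (1 : Matrix (Fin n) (Fin n) ℝ))} =
    sSup {r : ℝ | ∃ v : EuclideanSpace ℝ (Fin n), ‖v‖ = 1 ∧
      r = Real.sqrt (‖mulv A v‖ ^ 2 - (inner ℝ v (mulv A v) : ℝ) ^ 2)} := by
  simp only [opNorm, mulv]
  set T : EuclideanSpace ℝ (Fin n) →L[ℝ] EuclideanSpace ℝ (Fin n) :=
    Matrix.toEuclideanCLM (𝕜 := ℝ) A with hT
  have hmap : ∀ α : ℝ, Matrix.toEuclideanCLM (𝕜 := ℝ) (A - α • (1 : Matrix (Fin n) (Fin n) ℝ))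
      = T - α • (1 : EuclideanSpace ℝ (Fin n) →L[ℝ] EuclideanSpace ℝ (Fin n)) := by
    intro α
    rw [_root_.map_sub, _root_.map_smul, _root_.map_one, hT]
  have hml : ∀ v : EuclideanSpace ℝ (Fin n),
      (WithLp.equiv 2 (Fin n → ℝ)).symm (A.mulVec ((WithLp.equiv 2 (Fin n → ℝ)) v)) = T v :=
    fun v => my_mulv_eq A v
  rcases Nat.eq_zero_or_pos n with hn | hn
  · subst hn
    have h1 : {r : ℝ | ∃ α : ℝ, r = ‖Matrix.toEuclideanCLM (𝕜 := ℝ)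
        (A - α • (1 : Matrix (Fin 0) (Fin 0) ℝ))‖} = {0} := by
      ext r
      simp only [Set.mem_setOf_eq, Set.mem_singleton_iff]
      constructor
      · rintro ⟨α, rfl⟩
        rw [Subsingleton.elim (Matrix.toEuclideanCLM (𝕜 := ℝ)
          (A - α • (1 : Matrix (Fin 0) (Fin 0) ℝ))) 0, norm_zero]
      · rintro rfl
        exact ⟨0, by rw [Subsingleton.elim (Matrix.toEuclideanCLM (𝕜 := ℝ)
          (A - (0:ℝ) • (1 : Matrix (Fin 0) (Fin 0) ℝ))) 0, norm_zero]⟩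
    have h2 : {r : ℝ | ∃ v : EuclideanSpace ℝ (Fin 0), ‖v‖ = 1 ∧
        r = Real.sqrt (‖(WithLp.equiv 2 (Fin 0 → ℝ)).symm
          (A.mulVec ((WithLp.equiv 2 (Fin 0 → ℝ)) v))‖ ^ 2 -
        (inner ℝ v ((WithLp.equiv 2 (Fin 0 → ℝ)).symm
          (A.mulVec ((WithLp.equiv 2 (Fin 0 → ℝ)) v))) : ℝ) ^ 2)} = ∅ := by
      ext r
      simp only [Set.mem_setOf_eq, Set.mem_empty_iff_false, iff_false]
      rintro ⟨v, hv, -⟩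
      rw [Subsingleton.elim v 0, norm_zero] at hv
      exact zero_ne_one hv
    rw [h1, h2, csInf_singleton, Real.sSup_empty]
  · haveI : Nontrivial (EuclideanSpace ℝ (Fin n)) := by
      refine nontrivial_of_ne (EuclideanSpace.single ⟨0, hn⟩ (1 : ℝ)) 0 ?_
      intro h
      have := congrArg norm h
      rw [EuclideanSpace.norm_single, norm_zero] at this
      norm_num at this
    simp_rw [hmap, hml]
    exact my_key T
end
end
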